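/- Let S be a finite commutative semigroup with two-selector K^γ_{αβ}, and let α_γ be scalars such that the symmetric matrix m_{αβ} = Σ_γ α_γ K^γ_{αβ} is invertible with inverse m^{αβ}. Then for all α0, α1, α2: Σ_β K^{α1}_{α0 β} m^{β α2} = Σ_β K^{α2}_{α0 β} m^{α1 β}. -/

import Mathlib

open Finset in
/-- If `m_{αβ} = Σ_γ α_γ K^γ_{αβ}` is invertible with inverse `m^{αβ}`, then
`Σ_β K^{α1}_{α0 β} m^{β α2} = Σ_β K^{α2}_{α0 β} m^{α1 β}`. -/
theorem twoSelector_inverse_metric_identity {S : Type*} [CommSemigroup S] [Fintype S]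
    [DecidableEq S] {F : Type*} [Field F]
    (K : S → S → S → F) (hK : ∀ a b c, K a b c = if a * b = c then 1 else 0)
    (c : S → F) (m mInv : Matrix S S F)
    (hm : ∀ a b, m a b = ∑ γ : S, c γ * K a b γ)
    (hInv₁ : mInv * m = 1) (hInv₂ : m * mInv = 1)
    (α₀ α₁ α₂ : S) :
    ∑ β : S, K α₀ β α₁ * mInv β α₂ = ∑ β : S, K α₀ β α₂ * mInv α₁ β := by
  have hmc : ∀ a b, m a b = c (a * b) := by
    intro a b
    rw [hm]
    simp only [hK]
    simp [mul_comm]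
  set P : Matrix S S F := fun x y => if α₀ * x = y then 1 else 0 with hP
  have key : m * P.transpose = P * m := by
    ext x z
    simp only [Matrix.mul_apply, Matrix.transpose_apply]; simp only [hP]
    have h1 : ∑ y : S, m x y * (if α₀ * z = y then 1 else 0) = m x (α₀ * z) := by
      simp
    have h2 : ∑ y : S, (if α₀ * x = y then 1 else 0) * m y z = m (α₀ * x) z := by
      simp
    rw [h1, h2, hmc, hmc, mul_left_comm, mul_assoc]
  have key2 : P.transpose * mInv = mInv * P := by
    calc P.transpose * mInv = (mInv * m) * P.transpose * mInv := by rw [hInv₁]; simp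
      _ = mInv * (m * P.transpose) * mInv := by simp [Matrix.mul_assoc]
      _ = mInv * (P * m) * mInv := by rw [key]
      _ = mInv * P * (m * mInv) := by simp [Matrix.mul_assoc]
      _ = mInv * P := by rw [hInv₂]; simp
  have := congrFun (congrFun key2 α₁) α₂
  simp only [Matrix.mul_apply, Matrix.transpose_apply, hP] at this
  calc ∑ β : S, K α₀ β α₁ * mInv β α₂
      = ∑ β : S, (if α₀ * β = α₁ then 1 else 0) * mInv β α₂ := by
        simp only [hK]
    _ = ∑ β : S, mInv α₁ β * (if α₀ * β = α₂ then 1 else 0) := this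
    _ = ∑ β : S, K α₀ β α₂ * mInv α₁ β := by
        simp only [hK]; exact Finset.sum_congr rfl fun β _ => by ring
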